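/- In the classical island problem, the posterior odds of guilt equal 1/(Np): if C is uniform on a population of N+1 individuals, S is independent of C, and each individual independently has trait Γ with probability p ∈ (0,1], then P(C=s | S=s, Γ_C=1, Γ_s=1) / P(C≠s | S=s, Γ_C=1, Γ_s=1) = 1/(Np). -/

import Mathlib

open MeasureTheory ProbabilityTheory
open scoped ENNReal

/-- Classical island problem: posterior odds of guilt equal `1/(N p)`. -/
theorem island_classical_posterior_odds
    {Ω : Type*} [MeasurableSpace Ω] (μ : Measure Ω) [IsProbabilityMeasure μ]
    {X : Type*} [Fintype X] [MeasurableSpace X] [MeasurableSingletonClass X]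
    (N : ℕ) (hX : Fintype.card X = N + 1)
    (C S : Ω → X) (hC : Measurable C) (hS : Measurable S)
    (Γ : X → Ω → Bool) (hΓ : ∀ x, Measurable (Γ x))
    (p : ℝ≥0∞) (hp0 : p ≠ 0) (hp1 : p ≤ 1)
    (hCunif : ∀ x : X, μ {ω | C ω = x} = 1 / (N + 1))
    (hCS : IndepFun C S μ)
    (hiid : iIndepFun Γ μ)
    (hBer : ∀ x, μ {ω | Γ x ω = true} = p)
    (hind : IndepFun (fun ω => (C ω, S ω)) (fun ω x => Γ x ω) μ)
    (s : X)
    (hpos : μ ({ω | S ω = s} ∩ {ω | Γ (C ω) ω = true} ∩ {ω | Γ s ω = true}) ≠ 0) :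
    μ[|{ω | S ω = s} ∩ {ω | Γ (C ω) ω = true} ∩ {ω | Γ s ω = true}] {ω | C ω = s}
      / μ[|{ω | S ω = s} ∩ {ω | Γ (C ω) ω = true} ∩ {ω | Γ s ω = true}] {ω | C ω ≠ s}
      = 1 / (N * p) := by
  classical
  set E : Set Ω := {ω | S ω = s} ∩ {ω | Γ (C ω) ω = true} ∩ {ω | Γ s ω = true} with hEdef
  set q : ℝ≥0∞ := μ {ω | S ω = s} with hqdef
  -- measurability
  have hmC : ∀ x : X, MeasurableSet {ω | C ω = x} := fun x =>
    hC (measurableSet_singleton x)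
  have hmS : MeasurableSet {ω | S ω = s} := hS (measurableSet_singleton s)
  have hmΓ : ∀ x, MeasurableSet {ω | Γ x ω = true} := fun x =>
    hΓ x (measurableSet_singleton true)
  have hmΓC : MeasurableSet {ω | Γ (C ω) ω = true} := by
    have h : {ω | Γ (C ω) ω = true} = ⋃ x : X, {ω | C ω = x} ∩ {ω | Γ x ω = true} := by
      ext ω
      simp only [Set.mem_setOf_eq, Set.mem_iUnion, Set.mem_inter_iff]
      constructor
      · intro h; exact ⟨C ω, rfl, h⟩
      · rintro ⟨x, hx, h⟩; rw [hx]; exact h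
    rw [h]
    exact MeasurableSet.iUnion fun x => (hmC x).inter (hmΓ x)
  have hmE : MeasurableSet E := (hmS.inter hmΓC).inter (hmΓ s)
  -- q and p are nonzero and finite
  have hEq : E ⊆ {ω | S ω = s} := fun ω hω => hω.1.1
  have hq0 : q ≠ 0 := fun h => hpos (le_antisymm (h ▸ measure_mono hEq) zero_le)
  have hqtop : q ≠ ∞ := (measure_lt_top μ _).ne
  have hptop : p ≠ ∞ := (lt_of_le_of_lt hp1 (by norm_num)).ne
  -- independence of (C=x, S=s) events
  have hCSx : ∀ x : X, μ ({ω | C ω = x} ∩ {ω | S ω = s}) = (1 / (N + 1 : ℝ≥0∞)) * q := by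
    intro x
    have := hCS.measure_inter_preimage_eq_mul {x} {s}
      (measurableSet_singleton x) (measurableSet_singleton s)
    simpa [Set.preimage, hCunif x, hqdef] using this
  -- the per-x decomposition of E
  have hExSet : ∀ x : X, E ∩ {ω | C ω = x}
      = ((fun ω => (C ω, S ω)) ⁻¹' ({x} ×ˢ {s}))
        ∩ ((fun ω y => Γ y ω) ⁻¹' {h : X → Bool | h x = true ∧ h s = true}) := by
    intro x
    ext ω
    simp only [hEdef, Set.mem_inter_iff, Set.mem_setOf_eq, Set.mem_preimage,
      Set.mem_prod, Set.mem_singleton_iff]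
    constructor
    · rintro ⟨⟨⟨h1, h2⟩, h3⟩, h4⟩
      rw [h4] at h2
      exact ⟨⟨h4, h1⟩, h2, h3⟩
    · rintro ⟨⟨h4, h1⟩, h2, h3⟩
      refine ⟨⟨⟨h1, ?_⟩, h3⟩, h4⟩
      rw [h4]; exact h2
  have hmul : ∀ x : X, μ (E ∩ {ω | C ω = x})
      = μ ({ω | C ω = x} ∩ {ω | S ω = s}) * μ ({ω | Γ x ω = true} ∩ {ω | Γ s ω = true}) := by
    intro x
    rw [hExSet x]
    have h1 : MeasurableSet ({x} ×ˢ ({s} : Set X)) :=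
      (measurableSet_singleton x).prod (measurableSet_singleton s)
    have h2 : MeasurableSet {h : X → Bool | h x = true ∧ h s = true} := by
      have : {h : X → Bool | h x = true ∧ h s = true}
          = (fun h : X → Bool => h x) ⁻¹' {true} ∩ (fun h : X → Bool => h s) ⁻¹' {true} := rfl
      rw [this]
      exact ((measurable_pi_apply x) (measurableSet_singleton true)).inter
        ((measurable_pi_apply s) (measurableSet_singleton true))
    rw [hind.measure_inter_preimage_eq_mul _ _ h1 h2]
    have e1 : (fun ω => (C ω, S ω)) ⁻¹' ({x} ×ˢ ({s} : Set X)) = {ω | C ω = x} ∩ {ω | S ω = s} := by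
      ext ω; simp [Set.mem_prod]
    have e2 : (fun ω y => Γ y ω) ⁻¹' {h : X → Bool | h x = true ∧ h s = true}
        = {ω | Γ x ω = true} ∩ {ω | Γ s ω = true} := rfl
    rw [e1, e2]
  -- value for x ≠ s
  have hval_ne : ∀ x : X, x ≠ s → μ (E ∩ {ω | C ω = x})
      = (1 / (N + 1 : ℝ≥0∞)) * q * (p * p) := by
    intro x hxs
    rw [hmul x, hCSx x]
    congr 1
    have := (hiid.indepFun hxs).measure_inter_preimage_eq_mul {true} {true}
      (measurableSet_singleton true) (measurableSet_singleton true)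
    simpa [Set.preimage, hBer x, hBer s] using this
  -- value for x = s
  have hval_s : μ (E ∩ {ω | C ω = s}) = (1 / (N + 1 : ℝ≥0∞)) * q * p := by
    rw [hmul s, hCSx s, Set.inter_self, hBer s]
  -- denominator event decomposition
  have hne : E ∩ {ω | C ω ≠ s} = ⋃ x ∈ Finset.univ.erase s, E ∩ {ω | C ω = x} := by
    ext ω
    simp only [Set.mem_inter_iff, Set.mem_setOf_eq, Set.mem_iUnion, Finset.mem_erase,
      Finset.mem_univ, and_true, exists_prop]
    constructor
    · rintro ⟨hE, hne⟩; exact ⟨C ω, hne, hE, rfl⟩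
    · rintro ⟨x, hxs, hE, hx⟩; exact ⟨hE, hx ▸ hxs⟩
  have hden : μ (E ∩ {ω | C ω ≠ s})
      = (N : ℝ≥0∞) * ((1 / (N + 1 : ℝ≥0∞)) * q * (p * p)) := by
    rw [hne, measure_biUnion_finset ?hd ?hm]
    · rw [Finset.sum_congr rfl fun x hx => hval_ne x (Finset.mem_erase.mp hx).1]
      rw [Finset.sum_const, Finset.card_erase_of_mem (Finset.mem_univ s),
        Finset.card_univ, hX]
      simp [nsmul_eq_mul]
    case hd =>
      intro x _ y _ hxy
      refine Set.disjoint_left.mpr ?_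
      rintro ω ⟨-, hx⟩ ⟨-, hy⟩
      exact hxy (hx ▸ hy ▸ rfl)
    case hm =>
      intro x _
      exact hmE.inter (hmC x)
  -- assemble
  have hmE' : μ E ≠ 0 := hpos
  have hmEtop : μ E ≠ ∞ := (measure_lt_top μ _).ne
  have hcond1 : μ[|E] {ω | C ω = s} = (μ E)⁻¹ * μ (E ∩ {ω | C ω = s}) :=
    cond_apply hmE μ _
  have hcond2 : μ[|E] {ω | C ω ≠ s} = (μ E)⁻¹ * μ (E ∩ {ω | C ω ≠ s}) :=
    cond_apply hmE μ _
  rw [hcond1, hcond2, hval_s, hden]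
  have hinv0 : (μ E)⁻¹ ≠ 0 := ENNReal.inv_ne_zero.mpr hmEtop
  have hinvtop : (μ E)⁻¹ ≠ ∞ := ENNReal.inv_ne_top.mpr hmE'
  rw [ENNReal.mul_div_mul_left _ _ hinv0 hinvtop]
  -- now: ((N+1)⁻¹ * q * p) / (N * ((N+1)⁻¹ * q * (p*p))) = 1 / (N * p)
  have hu0 : (1 / (N + 1 : ℝ≥0∞)) * q * p ≠ 0 := by
    refine mul_ne_zero (mul_ne_zero ?_ hq0) hp0
    simp [ENNReal.div_ne_zero]
  have hutop : (1 / (N + 1 : ℝ≥0∞)) * q * p ≠ ∞ := by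
    apply ENNReal.mul_ne_top (ENNReal.mul_ne_top ?_ hqtop) hptop
    simp [ENNReal.div_eq_inv_mul]
  have hrw : (N : ℝ≥0∞) * ((1 / (N + 1 : ℝ≥0∞)) * q * (p * p))
      = (N * p) * ((1 / (N + 1 : ℝ≥0∞)) * q * p) := by ring
  rw [hrw]
  calc (1 / (N + 1 : ℝ≥0∞)) * q * p / ((N : ℝ≥0∞) * p * ((1 / (N + 1 : ℝ≥0∞)) * q * p))
      = 1 * ((1 / (N + 1 : ℝ≥0∞)) * q * p) / ((N : ℝ≥0∞) * p * ((1 / (N + 1 : ℝ≥0∞)) * q * p)) := by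
        rw [one_mul]
    _ = 1 / ((N : ℝ≥0∞) * p) := ENNReal.mul_div_mul_right _ _ hu0 hutop
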